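/- For every integer n ≥ n0 and every integer ℓ ≥ a, the distribution of D_n is given by P(D_n = ℓ) = Σ_{m=a}^{ℓ} (−1)^{m−a} · binom(ℓ−1, m−1) · binom(m−1, a−1) · ∏_{j=n0}^{n−1} (1 − p·m/j), where the empty product (n = n0) is 1. -/

import Mathlib

open MeasureTheory Filter

lemma alt_real (n : ℕ) :
    ∑ i ∈ Finset.range (n + 1), (-1 : ℝ) ^ i * (n.choose i : ℝ)
      = if n = 0 then 1 else 0 := by
  have h := Int.alternating_sum_range_choose (n := n)
  have h2 : ((∑ i ∈ Finset.range (n + 1), (-1 : ℤ) ^ i * (n.choose i : ℤ) : ℤ) : ℝ)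
      = ((if n = 0 then 1 else 0 : ℤ) : ℝ) := by exact_mod_cast h
  push_cast at h2
  simpa using h2

lemma base_sum (a ℓ : ℕ) (ha : 1 ≤ a) (hal : a ≤ ℓ) :
    ∑ m ∈ Finset.Icc a ℓ,
        (-1 : ℝ) ^ (m - a) * ((ℓ - 1).choose (m - 1) : ℝ) * ((m - 1).choose (a - 1) : ℝ)
      = if ℓ = a then 1 else 0 := by
  rw [← Finset.Ico_add_one_right_eq_Icc, Finset.sum_Ico_eq_sum_range]
  have hrange : ℓ + 1 - a = (ℓ - a) + 1 := by omega
  rw [hrange]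
  have hterm : ∀ i ∈ Finset.range ((ℓ - a) + 1),
      (-1 : ℝ) ^ (a + i - a) * ((ℓ - 1).choose (a + i - 1) : ℝ) * ((a + i - 1).choose (a - 1) : ℝ)
        = ((ℓ - 1).choose (a - 1) : ℝ) * ((-1 : ℝ) ^ i * ((ℓ - a).choose i : ℝ)) := by
    intro i hi
    rw [Finset.mem_range] at hi
    have hkn : a + i - 1 ≤ ℓ - 1 := by omega
    have hsk : a - 1 ≤ a + i - 1 := by omega
    have hc := Nat.choose_mul (n := ℓ - 1) hsk
    have e1 : ℓ - 1 - (a - 1) = ℓ - a := by omega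
    have e2 : a + i - 1 - (a - 1) = i := by omega
    rw [e1, e2] at hc
    have hcast : ((ℓ - 1).choose (a + i - 1) : ℝ) * ((a + i - 1).choose (a - 1) : ℝ)
        = ((ℓ - 1).choose (a - 1) : ℝ) * ((ℓ - a).choose i : ℝ) := by exact_mod_cast hc
    have e3 : a + i - a = i := by omega
    rw [e3, mul_assoc, hcast]
    ring
  rw [Finset.sum_congr rfl hterm, ← Finset.mul_sum, alt_real]
  by_cases h : ℓ = a
  · subst h
    simp [Nat.sub_self]
  · have : ℓ - a ≠ 0 := by omega
    simp [h, this]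

lemma key_id {k m : ℕ} (h1 : 1 ≤ m) (hmk : m ≤ k) :
    (k.choose (m - 1) : ℝ) * ((k : ℝ) + 1 - (m : ℝ))
      = (k : ℝ) * ((k - 1).choose (m - 1) : ℝ) := by
  obtain ⟨m', rfl⟩ : ∃ m', m = m' + 1 := ⟨m - 1, by omega⟩
  obtain ⟨k', rfl⟩ : ∃ k', k = k' + 1 := ⟨k - 1, by omega⟩
  have e1 := Nat.choose_succ_right_eq (k' + 1) m'
  have e2 := Nat.add_one_mul_choose_eq k' m'
  have hnat : (k' + 1).choose m' * (k' + 1 - m') = (k' + 1) * k'.choose m' := by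
    rw [← e1, ← e2]
  have hm'k : m' ≤ k' + 1 := by omega
  have hcast : (((k' + 1).choose m' * (k' + 1 - m') : ℕ) : ℝ)
      = (((k' + 1) * k'.choose m' : ℕ) : ℝ) := by exact_mod_cast hnat
  push_cast [Nat.cast_sub hm'k] at hcast
  simp only [Nat.add_sub_cancel]
  push_cast
  linarith [hcast]

theorem stmt_16 {Ω : Type*} {m0 : MeasurableSpace Ω} (μ : Measure Ω) [IsProbabilityMeasure μ]
    (p : ℝ) (hp0 : 0 < p) (hp1 : p ≤ 1) (n0 a : ℕ) (ha1 : 1 ≤ a) (han0 : a ≤ n0)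
    (ℱ : Filtration ℕ m0) (D : ℕ → Ω → ℕ)
    (hadp : ∀ n, n0 ≤ n → Measurable[ℱ n] (D n))
    (hpos : ∀ n, n0 ≤ n → ∀ᵐ ω ∂μ, 1 ≤ D n ω)
    (hD0 : ∀ᵐ ω ∂μ, D n0 ω = a)
    (hstep : ∀ n, n0 ≤ n → ∀ᵐ ω ∂μ, D (n + 1) ω = D n ω ∨ D (n + 1) ω = D n ω + 1)
    (hcond : ∀ n, n0 ≤ n →
      μ[(fun ω => if D (n + 1) ω = D n ω + 1 then (1 : ℝ) else 0) | ℱ n]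
        =ᵐ[μ] fun ω => p * (D n ω : ℝ) / n) :
    ∀ n, n0 ≤ n → ∀ ℓ : ℕ, a ≤ ℓ →
      (μ {ω | D n ω = ℓ}).toReal
        = ∑ m ∈ Finset.Icc a ℓ,
            (-1 : ℝ) ^ (m - a) * ((ℓ - 1).choose (m - 1) : ℝ) *
              ((m - 1).choose (a - 1) : ℝ) *
              ∏ j ∈ Finset.Ico n0 n, (1 - p * m / j) := by
  have hmeasD : ∀ n, n0 ≤ n → Measurable (D n) := fun n hn =>
    (hadp n hn).mono (ℱ.le n) le_rfl
  have hms : ∀ n, n0 ≤ n → ∀ k : ℕ, MeasurableSet {ω | D n ω = k} := fun n hn k =>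
    (hmeasD n hn) (measurableSet_singleton k)
  have hU : ∀ n, n0 ≤ n → MeasurableSet {ω | D (n + 1) ω = D n ω + 1} := by
    intro n hn
    exact measurableSet_eq_fun (hmeasD (n + 1) (by omega))
      ((hmeasD n hn).add measurable_const)
  have hge : ∀ n, n0 ≤ n → ∀ᵐ ω ∂μ, a ≤ D n ω := by
    intro n hn
    induction n, hn using Nat.le_induction with
    | base => filter_upwards [hD0] with ω h; omega
    | succ n hn ih =>
      filter_upwards [ih, hstep n hn] with ω h1 h2
      rcases h2 with h | h <;> omega
  have hkey : ∀ n, n0 ≤ n → ∀ k : ℕ,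
      (μ ({ω | D n ω = k} ∩ {ω | D (n + 1) ω = D n ω + 1})).toReal
        = p * k / n * (μ {ω | D n ω = k}).toReal := by
    intro n hn k
    set U := {ω | D (n + 1) ω = D n ω + 1} with hUdef
    set s := {ω | D n ω = k} with hsdef
    have hsm : MeasurableSet[ℱ n] s := (hadp n hn) (measurableSet_singleton k)
    have hsm0 : MeasurableSet s := hms n hn k
    have hUm : MeasurableSet U := hU n hn
    have hfeq : (fun ω => if D (n + 1) ω = D n ω + 1 then (1 : ℝ) else 0)
        = Set.indicator U (fun _ => (1 : ℝ)) := by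
      funext ω
      by_cases h : D (n + 1) ω = D n ω + 1 <;> simp [Set.indicator, hUdef, h]
    have hfint : Integrable (fun ω => if D (n + 1) ω = D n ω + 1 then (1 : ℝ) else 0) μ := by
      rw [hfeq]
      exact (integrable_const (1 : ℝ)).indicator hUm
    have h1 : ∫ ω in s, (μ[(fun ω => if D (n + 1) ω = D n ω + 1 then (1 : ℝ) else 0)|ℱ n]) ω ∂μ
        = ∫ ω in s, (if D (n + 1) ω = D n ω + 1 then (1 : ℝ) else 0) ∂μ :=
      setIntegral_condExp (ℱ.le n) hfint hsm
    have h2 : ∫ ω in s, (μ[(fun ω => if D (n + 1) ω = D n ω + 1 then (1 : ℝ) else 0)|ℱ n]) ω ∂μ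
        = ∫ ω in s, p * (D n ω : ℝ) / n ∂μ :=
      setIntegral_congr_ae hsm0 ((hcond n hn).mono fun ω h _ => h)
    have h3 : ∫ ω in s, p * (D n ω : ℝ) / n ∂μ = ∫ ω in s, p * (k : ℝ) / n ∂μ := by
      refine setIntegral_congr_fun hsm0 fun ω hω => ?_
      have hω' : D n ω = k := hω
      rw [hω']
    have h4 : ∫ ω in s, p * (k : ℝ) / n ∂μ = (μ s).toReal * (p * k / n) := by
      rw [setIntegral_const, smul_eq_mul, measureReal_def]
    have h5 : ∫ ω in s, (if D (n + 1) ω = D n ω + 1 then (1 : ℝ) else 0) ∂μ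
        = (μ (s ∩ U)).toReal := by
      rw [hfeq, setIntegral_indicator hUm, setIntegral_const, smul_eq_mul, mul_one, measureReal_def]
    rw [← h5, ← h1, h2, h3, h4]
    ring
  have hrec : ∀ n, n0 ≤ n → ∀ ℓ : ℕ, 1 ≤ ℓ →
      (μ {ω | D (n + 1) ω = ℓ}).toReal
        = (1 - p * ℓ / n) * (μ {ω | D n ω = ℓ}).toReal
          + p * ((ℓ : ℝ) - 1) / n * (μ {ω | D n ω = ℓ - 1}).toReal := by
    intro n hn ℓ hℓ
    set U := {ω | D (n + 1) ω = D n ω + 1} with hUdef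
    set A := {ω | D n ω = ℓ} with hAdef
    set B := {ω | D n ω = ℓ - 1} with hBdef
    have hUm : MeasurableSet U := hU n hn
    have hAm : MeasurableSet A := hms n hn ℓ
    have hBm : MeasurableSet B := hms n hn (ℓ - 1)
    have hTeq : {ω | D (n + 1) ω = ℓ} =ᵐ[μ] (((A \ U) ∪ (B ∩ U) : Set Ω)) := by
      rw [Filter.eventuallyEq_set]
      filter_upwards [hstep n hn] with ω h
      simp only [Set.mem_union, Set.mem_diff, Set.mem_inter_iff, Set.mem_setOf_eq,
        hAdef, hBdef, hUdef]
      omega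
    have hdisj : Disjoint (A \ U) (B ∩ U) :=
      Set.disjoint_left.2 fun ω h1 h2 => h1.2 h2.2
    have hμT : μ {ω | D (n + 1) ω = ℓ} = μ (A \ U) + μ (B ∩ U) := by
      rw [measure_congr hTeq, measure_union hdisj (hBm.inter hUm)]
    have hAsplit : μ A = μ (A ∩ U) + μ (A \ U) := by
      rw [measure_inter_add_diff A hUm]
    have hfin : ∀ t : Set Ω, μ t ≠ ⊤ := fun t => measure_ne_top μ t
    have hT' : (μ {ω | D (n + 1) ω = ℓ}).toReal = (μ (A \ U)).toReal + (μ (B ∩ U)).toReal := by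
      rw [hμT, ENNReal.toReal_add (hfin _) (hfin _)]
    have hA' : (μ A).toReal = (μ (A ∩ U)).toReal + (μ (A \ U)).toReal := by
      rw [hAsplit, ENNReal.toReal_add (hfin _) (hfin _)]
    have hk1 := hkey n hn ℓ
    have hk2 := hkey n hn (ℓ - 1)
    have hcast : (((ℓ - 1 : ℕ)) : ℝ) = (ℓ : ℝ) - 1 := by
      push_cast [Nat.cast_sub hℓ]; ring
    rw [hcast] at hk2
    rw [← hUdef, ← hAdef] at hk1
    rw [← hUdef, ← hBdef] at hk2
    rw [hT']
    linarith [hk1, hk2, hA']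
  intro n hn
  induction n, hn using Nat.le_induction with
  | base =>
    intro ℓ hℓ
    simp only [Finset.Ico_self, Finset.prod_empty, mul_one]
    rw [base_sum a ℓ ha1 hℓ]
    by_cases h : ℓ = a
    · subst h
      have heq : {ω | D n0 ω = ℓ} =ᵐ[μ] (Set.univ : Set Ω) := by
        rw [Filter.eventuallyEq_set]
        filter_upwards [hD0] with ω hω
        simp [hω]
      rw [measure_congr heq]
      simp
    · have heq : {ω | D n0 ω = ℓ} =ᵐ[μ] (∅ : Set Ω) := by
        rw [Filter.eventuallyEq_set]
        filter_upwards [hD0] with ω hω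
        simp only [Set.mem_setOf_eq, Set.mem_empty_iff_false, iff_false]
        omega
      rw [measure_congr heq]
      simp [h]
  | succ n hn ih =>
    intro ℓ hℓ
    have hn1 : (1 : ℕ) ≤ n := le_trans (le_trans ha1 han0) hn
    have hprod : ∀ m : ℕ, ∏ j ∈ Finset.Ico n0 (n + 1), (1 - p * m / j)
        = (∏ j ∈ Finset.Ico n0 n, (1 - p * m / j)) * (1 - p * m / n) :=
      fun m => Finset.prod_Ico_succ_top hn _
    have hrecn := hrec n hn ℓ (le_trans ha1 hℓ)
    rcases eq_or_lt_of_le hℓ with rfl | hlt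
    · -- case ℓ = a
      have hB0 : μ {ω | D n ω = a - 1} = 0 := by
        rw [measure_eq_zero_iff_ae_notMem]
        filter_upwards [hge n hn] with ω h
        intro hc
        have hc' : D n ω = a - 1 := hc
        omega
      rw [hB0] at hrecn
      simp only [ENNReal.toReal_zero, mul_zero, add_zero] at hrecn
      rw [hrecn, ih a le_rfl]
      rw [Finset.Icc_self, Finset.sum_singleton, Finset.sum_singleton, hprod a]
      ring
    · -- case a < ℓ
      obtain ⟨k, rfl⟩ : ∃ k, ℓ = k + 1 := ⟨ℓ - 1, by omega⟩
      have hak : a ≤ k := by omega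
      have ih1 := ih (k + 1) hℓ
      have ih2 := ih k hak
      simp only [Nat.add_sub_cancel] at hrecn ih1 ⊢
      rw [hrecn, ih1, ih2]
      push_cast
      simp only [hprod]
      have hsplit : ∀ f : ℕ → ℝ,
          ∑ m ∈ Finset.Icc a (k + 1), f m = (∑ m ∈ Finset.Icc a k, f m) + f (k + 1) := by
        intro f
        rw [← Finset.Ico_add_one_right_eq_Icc a (k + 1), Finset.sum_Ico_succ_top (by omega : a ≤ k + 1),
          Finset.Ico_add_one_right_eq_Icc]
      have e1 := hsplit (fun m => (-1 : ℝ) ^ (m - a) * (k.choose (m - 1) : ℝ) *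
        ((m - 1).choose (a - 1) : ℝ) * ∏ j ∈ Finset.Ico n0 n, (1 - p * m / j))
      have e2 := hsplit (fun m => (-1 : ℝ) ^ (m - a) * (k.choose (m - 1) : ℝ) *
        ((m - 1).choose (a - 1) : ℝ) *
        ((∏ j ∈ Finset.Ico n0 n, (1 - p * m / j)) * (1 - p * m / n)))
      simp only [Nat.add_sub_cancel] at e1 e2
      push_cast at e1 e2
      have e3 : ∑ m ∈ Finset.Icc a k, (-1 : ℝ) ^ (m - a) * (k.choose (m - 1) : ℝ) *
            ((m - 1).choose (a - 1) : ℝ) *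
            ((∏ j ∈ Finset.Ico n0 n, (1 - p * m / j)) * (1 - p * m / n))
          = (1 - p * ((k : ℝ) + 1) / n) *
              ∑ m ∈ Finset.Icc a k, (-1 : ℝ) ^ (m - a) * (k.choose (m - 1) : ℝ) *
                ((m - 1).choose (a - 1) : ℝ) * ∏ j ∈ Finset.Ico n0 n, (1 - p * m / j)
            + (p * (k : ℝ) / n) *
              ∑ m ∈ Finset.Icc a k, (-1 : ℝ) ^ (m - a) * ((k - 1).choose (m - 1) : ℝ) *
                ((m - 1).choose (a - 1) : ℝ) * ∏ j ∈ Finset.Ico n0 n, (1 - p * m / j) := by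
        rw [Finset.mul_sum, Finset.mul_sum, ← Finset.sum_add_distrib]
        refine Finset.sum_congr rfl fun m hm => ?_
        rw [Finset.mem_Icc] at hm
        have hkid := key_id (le_trans ha1 hm.1) hm.2
        linear_combination ((-1 : ℝ) ^ (m - a) * ((m - 1).choose (a - 1) : ℝ) *
          (∏ j ∈ Finset.Ico n0 n, (1 - p * m / j)) * p / n) * hkid
      linear_combination (1 - p * ((k : ℝ) + 1) / n) * e1 - e2 - e3
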